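/- Let C be a real symmetric positive-definite 3×3 matrix with spectral decomposition C = Σ_a λ_a² N_a N_aᵀ, with {N_a} an orthonormal basis of ℝ³ and the λ_a > 0 pairwise distinct. Let M ≥ 1, and for each α = 1,…,M let Γ^α be a real symmetric positive-definite 3×3 matrix with spectral decomposition Γ^α = Σ_a (Γ^α_a)² N̄^α_a (N̄^α_a)ᵀ, with {N̄^α_a} orthonormal and the Γ^α_a > 0 pairwise distinct; let E^α and E^{v,α} be differentiable functions (0,∞) → ℝ with everywhere positive derivative, let 𝕼^α be the projection operator associated with (λ_a; N_a; E^α) and 𝕼^{v,α} the projection operator associated with (Γ^α_a; N̄^α_a; E^{v,α}). If symmetric 3×3 matrices T^α satisfy 𝕼^{v,α}(T^α) = 0 for every α = 1,…,M (the equilibrium conditions Q^α = O), then each T^α = 0, and consequently the total non-equilibrium stress S^neq := Σ_{α=1}^M 𝕼^α(T^α) vanishes: S^neq = O. -/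

import Mathlib

open Matrix Finset

/-- The projection operator of Hill's framework associated with principal values `a`,
principal directions `V`, a scale function `f` and its derivative `f'`. -/
noncomputable def projOp (a : Fin 3 → ℝ) (V : Fin 3 → Fin 3 → ℝ) (f f' : ℝ → ℝ)
    (A : Matrix (Fin 3) (Fin 3) ℝ) : Matrix (Fin 3) (Fin 3) ℝ :=
  (∑ i, ((f' (a i) / a i) * (V i ⬝ᵥ A *ᵥ V i)) • vecMulVec (V i) (V i)) +
    ∑ i, ∑ j ∈ univ.filter (fun j => i < j),
      ((2 * (f (a i) - f (a j)) / ((a i) ^ 2 - (a j) ^ 2)) * (V i ⬝ᵥ A *ᵥ V j)) •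
        (vecMulVec (V i) (V j) + vecMulVec (V j) (V i))

lemma dvv (x y u w : Fin 3 → ℝ) : u ⬝ᵥ (vecMulVec x y) *ᵥ w = (u ⬝ᵥ x) * (y ⬝ᵥ w) := by
  simp [vecMulVec, mulVec, dotProduct, Finset.mul_sum, Finset.sum_mul]
  ring_nf
  rw [Finset.sum_comm]

lemma dadd (u w : Fin 3 → ℝ) (A B : Matrix (Fin 3) (Fin 3) ℝ) :
    u ⬝ᵥ (A + B) *ᵥ w = u ⬝ᵥ A *ᵥ w + u ⬝ᵥ B *ᵥ w := by
  simp [Matrix.add_mulVec, dotProduct_add]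

lemma dsmul (c : ℝ) (u w : Fin 3 → ℝ) (A : Matrix (Fin 3) (Fin 3) ℝ) :
    u ⬝ᵥ (c • A) *ᵥ w = c * (u ⬝ᵥ A *ᵥ w) := by
  rw [Matrix.smul_mulVec, dotProduct_smul]; rfl

lemma dsymm (u w : Fin 3 → ℝ) (A : Matrix (Fin 3) (Fin 3) ℝ) (hA : A.IsSymm) :
    u ⬝ᵥ A *ᵥ w = w ⬝ᵥ A *ᵥ u := by
  rw [Matrix.dotProduct_mulVec, ← Matrix.mulVec_transpose, hA.eq, dotProduct_comm]

lemma sum_pairs {Mt : Type} [AddCommMonoid Mt] (f : Fin 3 → Fin 3 → Mt) :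
    (∑ i, ∑ j ∈ univ.filter (fun j => i < j), f i j) = f 0 1 + f 0 2 + f 1 2 := by
  rw [Fin.sum_univ_three]
  have h0 : univ.filter (fun j => (0:Fin 3) < j) = {1, 2} := by decide
  have h1 : univ.filter (fun j => (1:Fin 3) < j) = {2} := by decide
  have h2 : univ.filter (fun j => (2:Fin 3) < j) = ∅ := by decide
  rw [h0, h1, h2]
  rw [show ({1,2} : Finset (Fin 3)) = insert 1 {2} from rfl, Finset.sum_insert (by decide),
    Finset.sum_singleton, Finset.sum_singleton, Finset.sum_empty, add_zero, add_assoc]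

lemma entryPTP (V : Fin 3 → Fin 3 → ℝ) (A : Matrix (Fin 3) (Fin 3) ℝ) (k l : Fin 3) :
    (Matrix.of V * A * (Matrix.of V)ᵀ) k l = V k ⬝ᵥ A *ᵥ V l := by
  simp [Matrix.mul_apply, dotProduct, mulVec, Finset.sum_mul, Finset.mul_sum]
  rw [Finset.sum_comm]
  congr 1; ext i; congr 1; ext j; ring

lemma projOp_zero (a : Fin 3 → ℝ) (V : Fin 3 → Fin 3 → ℝ) (f f' : ℝ → ℝ) :
    projOp a V f f' 0 = 0 := by
  simp [projOp, Matrix.zero_mulVec, dotProduct_zero]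

/-- Key lemma: if the projection operator annihilates a symmetric `A`, then `A = 0`. -/
lemma eq_zero_of_projOp_eq_zero (a : Fin 3 → ℝ) (V : Fin 3 → Fin 3 → ℝ) (f f' : ℝ → ℝ)
    (A : Matrix (Fin 3) (Fin 3) ℝ)
    (hpos : ∀ i, 0 < a i) (hdist : ∀ i j, i ≠ j → a i ≠ a j)
    (hON : ∀ i j, V i ⬝ᵥ V j = if i = j then (1 : ℝ) else 0)
    (hf : ∀ x : ℝ, 0 < x → HasDerivAt f (f' x) x)
    (hf' : ∀ x : ℝ, 0 < x → 0 < f' x)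
    (hA : A.IsSymm) (h : projOp a V f f' A = 0) : A = 0 := by
  have hmono : StrictMonoOn f (Set.Ioi (0:ℝ)) := by
    apply strictMonoOn_of_deriv_pos (convex_Ioi 0)
    · intro x hx
      exact ((hf x hx).differentiableAt.continuousAt).continuousWithinAt
    · intro x hx
      rw [interior_Ioi] at hx
      rw [(hf x hx).deriv]
      exact hf' x hx
  have hfne : ∀ i j : Fin 3, i ≠ j → f (a i) - f (a j) ≠ 0 := by
    intro i j hij
    refine sub_ne_zero.mpr fun hfe => hdist i j hij ?_
    exact hmono.injOn (Set.mem_Ioi.mpr (hpos i)) (Set.mem_Ioi.mpr (hpos j)) hfe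
  have hane : ∀ i j : Fin 3, i ≠ j → a i ^ 2 - a j ^ 2 ≠ 0 := by
    intro i j hij hz
    have h1 : (a i - a j) * (a i + a j) = 0 := by linear_combination hz
    rcases mul_eq_zero.mp h1 with h2 | h2
    · exact hdist i j hij (by linarith)
    · linarith [hpos i, hpos j]
  have hf'ne : ∀ k : Fin 3, f' (a k) ≠ 0 := fun k => ne_of_gt (hf' _ (hpos k))
  have hane0 : ∀ k : Fin 3, a k ≠ 0 := fun k => ne_of_gt (hpos k)
  have gdef : ∀ k l : Fin 3, V k ⬝ᵥ A *ᵥ V l =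
      V k 0 * (A *ᵥ V l) 0 + V k 1 * (A *ᵥ V l) 1 + V k 2 * (A *ᵥ V l) 2 := by
    intro k l
    simp [dotProduct, Fin.sum_univ_three]
  have h0 : ∀ k l : Fin 3, V k ⬝ᵥ (projOp a V f f' A) *ᵥ V l = 0 := by
    intro k l; rw [h]; simp [Matrix.zero_mulVec]
  have h00 := h0 0 0
  have h11 := h0 1 1
  have h22 := h0 2 2
  have h01 := h0 0 1
  have h02 := h0 0 2
  have h12 := h0 1 2
  simp only [projOp, sum_pairs] at h00 h11 h22 h01 h02 h12
  simp only [Fin.sum_univ_three, dadd, dsmul, dvv, hON] at h00 h11 h22 h01 h02 h12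
  norm_num [Fin.ext_iff] at h00 h11 h22 h01 h02 h12
  have g00 : V 0 ⬝ᵥ A *ᵥ V 0 = 0 := by
    rcases h00 with (hc | hc) | hc
    · exact absurd hc (hf'ne 0)
    · exact absurd hc (hane0 0)
    · exact hc
  have g11 : V 1 ⬝ᵥ A *ᵥ V 1 = 0 := by
    rcases h11 with (hc | hc) | hc
    · exact absurd hc (hf'ne 1)
    · exact absurd hc (hane0 1)
    · exact hc
  have g22 : V 2 ⬝ᵥ A *ᵥ V 2 = 0 := by
    rcases h22 with (hc | hc) | hc
    · exact absurd hc (hf'ne 2)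
    · exact absurd hc (hane0 2)
    · exact hc
  have g01 : V 0 ⬝ᵥ A *ᵥ V 1 = 0 := by
    rcases h01 with (hc | hc) | hc
    · exact absurd hc (hfne 0 1 (by decide))
    · exact absurd hc (hane 0 1 (by decide))
    · exact hc
  have g02 : V 0 ⬝ᵥ A *ᵥ V 2 = 0 := by
    rcases h02 with (hc | hc) | hc
    · exact absurd hc (hfne 0 2 (by decide))
    · exact absurd hc (hane 0 2 (by decide))
    · exact hc
  have g12 : V 1 ⬝ᵥ A *ᵥ V 2 = 0 := by
    rcases h12 with (hc | hc) | hc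
    · exact absurd hc (hfne 1 2 (by decide))
    · exact absurd hc (hane 1 2 (by decide))
    · exact hc
  have g10 : V 1 ⬝ᵥ A *ᵥ V 0 = 0 := by rw [dsymm _ _ _ hA]; exact g01
  have g20 : V 2 ⬝ᵥ A *ᵥ V 0 = 0 := by rw [dsymm _ _ _ hA]; exact g02
  have g21 : V 2 ⬝ᵥ A *ᵥ V 1 = 0 := by rw [dsymm _ _ _ hA]; exact g12
  set P : Matrix (Fin 3) (Fin 3) ℝ := Matrix.of V with hP
  have hPPt : P * Pᵀ = 1 := by
    ext i j
    have := hON i j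
    simpa [hP, Matrix.mul_apply, Matrix.transpose_apply, Matrix.of_apply, dotProduct,
      Matrix.one_apply] using this
  have hPtP : Pᵀ * P = 1 := mul_eq_one_comm.mp hPPt
  have hPTP : P * A * Pᵀ = 0 := by
    ext k l
    rw [Matrix.zero_apply, hP, entryPTP]
    fin_cases k <;> fin_cases l <;>
      first
        | exact g00 | exact g01 | exact g02
        | exact g10 | exact g11 | exact g12
        | exact g20 | exact g21 | exact g22
  have hA2 : Pᵀ * (P * A * Pᵀ) * P = A := by
    calc Pᵀ * (P * A * Pᵀ) * P
        = (Pᵀ * P) * A * (Pᵀ * P) := by simp only [Matrix.mul_assoc]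
      _ = A := by rw [hPtP, Matrix.one_mul, Matrix.mul_one]
  rw [← hA2, hPTP, Matrix.mul_zero, Matrix.zero_mul]

/-- The generalized model with `M ≥ 1` relaxation processes: if each
stress-like tensor `T^α` satisfies the equilibrium condition `𝕼^{v,α}(T^α) = O`, then
every `T^α = O` and the total non-equilibrium stress `Sⁿᵉᑫ = Σ_α 𝕼^α(T^α)` vanishes. -/
theorem total_nonequilibrium_stress_vanishes
    (C : Matrix (Fin 3) (Fin 3) ℝ) (lam : Fin 3 → ℝ) (N : Fin 3 → Fin 3 → ℝ)
    (hC : C = ∑ i, ((lam i) ^ 2) • vecMulVec (N i) (N i))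
    (hpos : ∀ i, 0 < lam i) (hdist : ∀ i j, i ≠ j → lam i ≠ lam j)
    (hON : ∀ i j, N i ⬝ᵥ N j = if i = j then (1 : ℝ) else 0)
    (M : ℕ) (hM : 1 ≤ M)
    (Γ : Fin M → Matrix (Fin 3) (Fin 3) ℝ)
    (Ga : Fin M → Fin 3 → ℝ) (Nbar : Fin M → Fin 3 → Fin 3 → ℝ)
    (hΓ : ∀ α, Γ α = ∑ i, ((Ga α i) ^ 2) • vecMulVec (Nbar α i) (Nbar α i))
    (hGpos : ∀ α i, 0 < Ga α i) (hGdist : ∀ α, ∀ i j, i ≠ j → Ga α i ≠ Ga α j)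
    (hGON : ∀ α, ∀ i j, Nbar α i ⬝ᵥ Nbar α j = if i = j then (1 : ℝ) else 0)
    (E E' : Fin M → ℝ → ℝ) (Ev Ev' : Fin M → ℝ → ℝ)
    (hE : ∀ α, ∀ x : ℝ, 0 < x → HasDerivAt (E α) (E' α x) x)
    (hE' : ∀ α, ∀ x : ℝ, 0 < x → 0 < E' α x)
    (hEv : ∀ α, ∀ x : ℝ, 0 < x → HasDerivAt (Ev α) (Ev' α x) x)
    (hEv' : ∀ α, ∀ x : ℝ, 0 < x → 0 < Ev' α x)
    (T : Fin M → Matrix (Fin 3) (Fin 3) ℝ) (hT : ∀ α, (T α).IsSymm)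
    (heq : ∀ α, projOp (Ga α) (Nbar α) (Ev α) (Ev' α) (T α) = 0) :
    (∀ α, T α = 0) ∧ (∑ α, projOp lam N (E α) (E' α) (T α)) = 0 := by
  have hTall : ∀ α, T α = 0 := fun α =>
    eq_zero_of_projOp_eq_zero (Ga α) (Nbar α) (Ev α) (Ev' α) (T α)
      (hGpos α) (hGdist α) (hGON α) (hEv α) (hEv' α) (hT α) (heq α)
  refine ⟨hTall, Finset.sum_eq_zero fun α _ => ?_⟩
  rw [hTall α, projOp_zero]
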